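/- Let m ≥ 2 be an integer, and let D be a Hadamard design with parameters (4m−1, 2m−1, m−1), i.e., a symmetric 2-design with exactly 4m−1 blocks, each a (2m−1)-element subset of a (4m−1)-element point set, such that every pair of distinct points lies in exactly m−1 blocks. Then the set of blocks of D is a resolving set for the Odd graph O_{2m} = K(4m−1, 2m−1). -/

import Mathlib

/-- The Johnson graph `J(n,k)`: vertices are the `k`-element subsets of `{1,...,n}`,
two vertices adjacent iff their intersection has `k-1` elements. -/
def johnsonGraph (n k : ℕ) : SimpleGraph {s : Finset (Fin n) // s.card = k} where
  Adj U W := U ≠ W ∧ (U.1 ∩ W.1).card = k - 1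
  symm := by
    constructor
    intro U W h
    exact ⟨h.1.symm, by rw [Finset.inter_comm]; exact h.2⟩
  loopless := by
    constructor
    intro U h
    exact h.1 rfl

/-- The Kneser graph `K(n,k)`: vertices are the `k`-element subsets of `{1,...,n}`,
two vertices adjacent iff the corresponding subsets are disjoint. -/
def kneserGraph (n k : ℕ) : SimpleGraph {s : Finset (Fin n) // s.card = k} where
  Adj U W := U ≠ W ∧ Disjoint U.1 W.1
  symm := by
    constructor
    intro U W h
    exact ⟨h.1.symm, h.2.symm⟩
  loopless := by
    constructor
    intro U h
    exact h.1 rfl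

/-- A set `S` of vertices is a resolving set for `G` if every pair of distinct
vertices is resolved by some vertex of `S`, i.e. is at different distances from it. -/
def resolvingSet {V : Type*} (G : SimpleGraph V) (S : Set V) : Prop :=
  ∀ u v : V, u ≠ v → ∃ x ∈ S, G.dist u x ≠ G.dist v x

/-- The metric dimension `β(G)`: the minimum cardinality of a resolving set for `G`. -/
noncomputable def metricDim {V : Type*} (G : SimpleGraph V) : ℕ :=
  sInf {m | ∃ S : Finset V, resolvingSet G ↑S ∧ S.card = m}

open Finset SimpleGraph

namespace KneserAux

/-- distance profile function -/
def f (k s : ℕ) : ℕ := min (2 * (k - s)) (2 * s + 1)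

variable {n k : ℕ}

lemma vert_inter_le (U W : {s : Finset (Fin n) // s.card = k}) :
    (U.1 ∩ W.1).card ≤ k := by
  calc (U.1 ∩ W.1).card ≤ U.1.card := card_le_card inter_subset_left
  _ = k := U.2

lemma adj_inter (hn : n = 2 * k + 1) {U U' : {s : Finset (Fin n) // s.card = k}}
    (W : {s : Finset (Fin n) // s.card = k})
    (h : (kneserGraph n k).Adj U U') :
    k - 1 ≤ (U.1 ∩ W.1).card + (U'.1 ∩ W.1).card ∧
      (U.1 ∩ W.1).card + (U'.1 ∩ W.1).card ≤ k := by
  have hd : Disjoint U.1 U'.1 := h.2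
  have hdisj : Disjoint (U.1 ∩ W.1) (U'.1 ∩ W.1) :=
    hd.mono inter_subset_left inter_subset_left
  have hcup : (U.1 ∩ W.1) ∪ (U'.1 ∩ W.1) = (U.1 ∪ U'.1) ∩ W.1 := by
    rw [union_inter_distrib_right]
  have hUU' : (U.1 ∪ U'.1).card = 2 * k := by
    rw [card_union_of_disjoint hd, U.2, U'.2]; omega
  have hsum : (U.1 ∩ W.1).card + (U'.1 ∩ W.1).card = ((U.1 ∪ U'.1) ∩ W.1).card := by
    rw [← hcup, card_union_of_disjoint hdisj]
  constructor
  · -- lower bound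
    have h1 : ((U.1 ∪ U'.1) ∩ W.1).card + (W.1 \ (U.1 ∪ U'.1)).card = W.1.card := by
      rw [inter_comm]; exact card_inter_add_card_sdiff _ _
    have h2 : (W.1 \ (U.1 ∪ U'.1)).card ≤ (univ \ (U.1 ∪ U'.1)).card :=
      card_le_card (sdiff_subset_sdiff (subset_univ _) (le_refl _))
    have h3 : (univ \ (U.1 ∪ U'.1)).card = 1 := by
      rw [card_sdiff_of_subset (subset_univ _), card_univ, Fintype.card_fin, hUU', hn]; omega
    rw [W.2] at h1
    omega
  · have : ((U.1 ∪ U'.1) ∩ W.1).card ≤ W.1.card := card_le_card inter_subset_right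
    rw [W.2] at this; omega

lemma f_le_walk (hn : n = 2 * k + 1) :
    ∀ {U W : {s : Finset (Fin n) // s.card = k}} (p : (kneserGraph n k).Walk U W),
      f k (U.1 ∩ W.1).card ≤ p.length := by
  intro U W p
  induction p with
  | nil =>
    simp only [Walk.length_nil, inter_self, W.2, f]
    omega
  | @cons U U' W h p ih =>
    have h1 := adj_inter hn W h
    have h2 := vert_inter_le U W
    have h3 := vert_inter_le U' W
    simp only [Walk.length_cons, f] at ih ⊢
    omega

lemma walk_exists (hn : n = 2 * k + 1) (hk : 1 ≤ k) :
    ∀ (t : ℕ) (U W : {s : Finset (Fin n) // s.card = k}),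
      k - (U.1 ∩ W.1).card ≤ t →
      ∃ p : (kneserGraph n k).Walk U W, p.length ≤ 2 * t := by
  intro t
  induction t with
  | zero =>
    intro U W h
    have h2 := vert_inter_le U W
    have hs : (U.1 ∩ W.1).card = k := by omega
    have he : U.1 ∩ W.1 = U.1 := eq_of_subset_of_card_le inter_subset_left (by rw [hs, U.2])
    have : U.1 = W.1 := eq_of_subset_of_card_le
      (by rw [← he]; exact inter_subset_right) (by rw [U.2, W.2])
    have hUW : U = W := Subtype.ext this
    subst hUW
    exact ⟨Walk.nil, by simp⟩
  | succ t ih =>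
    intro U W h
    by_cases hle : k - (U.1 ∩ W.1).card ≤ t
    · obtain ⟨p, hp⟩ := ih U W hle
      exact ⟨p, by omega⟩
    · have h2 := vert_inter_le U W
      have hs : (U.1 ∩ W.1).card < k := by omega
      -- pick a ∈ U \ W, b ∈ W \ U
      have hUW : (U.1 \ W.1).Nonempty := by
        rw [← card_pos]
        have := card_inter_add_card_sdiff U.1 W.1
        rw [U.2] at this; omega
      have hWU : (W.1 \ U.1).Nonempty := by
        rw [← card_pos]
        have := card_inter_add_card_sdiff W.1 U.1
        rw [W.2, inter_comm] at this; omega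
      obtain ⟨a, ha⟩ := hUW
      obtain ⟨b, hb⟩ := hWU
      rw [mem_sdiff] at ha hb
      -- U'' = insert b (U.erase a)
      set U2 : Finset (Fin n) := insert b (U.1.erase a) with hU2def
      have hbnotin : b ∉ U.1.erase a := fun hmem => hb.2 (mem_of_mem_erase hmem)
      have hU2card : U2.card = k := by
        rw [hU2def, card_insert_of_notMem hbnotin, card_erase_of_mem ha.1, U.2]
        omega
      have hU2inter : (U2 ∩ W.1).card = (U.1 ∩ W.1).card + 1 := by
        have : U2 ∩ W.1 = insert b (U.1 ∩ W.1) := by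
          ext x
          simp only [hU2def, mem_inter, mem_insert, mem_erase]
          constructor
          · rintro ⟨(rfl | ⟨-, hx⟩), hw⟩
            · exact Or.inl rfl
            · exact Or.inr ⟨hx, hw⟩
          · rintro (rfl | ⟨hx, hw⟩)
            · exact ⟨Or.inl rfl, hb.1⟩
            · refine ⟨Or.inr ⟨?_, hx⟩, hw⟩
              rintro rfl; exact ha.2 hw
        rw [this, card_insert_of_notMem (fun hmem => hb.2 (mem_inter.1 hmem).1)]
      -- the common neighbor X = complement of U ∪ U2
      have hUU2 : U.1 ∪ U2 = insert b U.1 := by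
        rw [hU2def]
        ext x
        simp only [mem_union, mem_insert, mem_erase]
        constructor
        · rintro (hx | rfl | ⟨-, hx⟩) <;> tauto
        · rintro (rfl | hx) <;> tauto
      have hXcard : (univ \ (U.1 ∪ U2)).card = k := by
        rw [card_sdiff_of_subset (subset_univ _), card_univ, Fintype.card_fin, hUU2,
          card_insert_of_notMem hb.2, U.2, hn]
        omega
      set X : Finset (Fin n) := univ \ (U.1 ∪ U2) with hXdef
      have hdisjUX : Disjoint U.1 X := by
        rw [hXdef]
        exact disjoint_sdiff.mono_left subset_union_left
      have hdisjXU2 : Disjoint X U2 := by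
        rw [hXdef]
        exact (disjoint_sdiff.mono_left subset_union_right).symm
      have hUne : U.1.Nonempty := by rw [← card_pos, U.2]; omega
      have hadj1 : (kneserGraph n k).Adj U ⟨X, hXcard⟩ := by
        refine ⟨?_, hdisjUX⟩
        intro heq
        have : Disjoint U.1 U.1 := by
          conv_rhs => rw [show U.1 = X from congrArg Subtype.val heq]
          exact hdisjUX
        exact hUne.ne_empty (disjoint_self.mp this)
      have hU2ne : U2.Nonempty := by rw [← card_pos, hU2card]; omega
      have hadj2 : (kneserGraph n k).Adj ⟨X, hXcard⟩ ⟨U2, hU2card⟩ := by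
        refine ⟨?_, hdisjXU2⟩
        intro heq
        have : Disjoint U2 U2 := by
          conv_lhs => rw [show U2 = X from (congrArg Subtype.val heq).symm]
          exact hdisjXU2
        exact hU2ne.ne_empty (disjoint_self.mp this)
      obtain ⟨p, hp⟩ := ih ⟨U2, hU2card⟩ W (by simp only [hU2inter]; omega)
      exact ⟨Walk.cons hadj1 (Walk.cons hadj2 p), by simp [Walk.length_cons]; omega⟩

lemma walk_odd (hn : n = 2 * k + 1) (hk : 1 ≤ k) (U W : {s : Finset (Fin n) // s.card = k}) :
    ∃ p : (kneserGraph n k).Walk U W, p.length ≤ 2 * (U.1 ∩ W.1).card + 1 := by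
  have h2 := vert_inter_le U W
  have hsub : W.1 \ U.1 ⊆ univ \ U.1 := sdiff_subset_sdiff (subset_univ _) (le_refl _)
  have hcardWU : (W.1 \ U.1).card = k - (U.1 ∩ W.1).card := by
    have := card_inter_add_card_sdiff W.1 U.1
    rw [W.2, inter_comm] at this; omega
  have hcardcompl : (univ \ U.1).card = k + 1 := by
    rw [card_sdiff_of_subset (subset_univ _), card_univ, Fintype.card_fin, U.2, hn]; omega
  obtain ⟨U', hsub1, hsub2, hU'card⟩ :=
    exists_subsuperset_card_eq hsub (by omega) (by omega : k ≤ (univ \ U.1).card)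
  have hdisj : Disjoint U.1 U' := by
    refine Disjoint.mono_right hsub2 ?_
    exact disjoint_sdiff
  have hUne : U.1.Nonempty := by rw [← card_pos, U.2]; omega
  have hadj : (kneserGraph n k).Adj U ⟨U', hU'card⟩ := by
    refine ⟨?_, hdisj⟩
    intro heq
    have : Disjoint U.1 U.1 := by
      conv_rhs => rw [show U.1 = U' from congrArg Subtype.val heq]
      exact hdisj
    exact hUne.ne_empty (disjoint_self.mp this)
  have hinter : k - (U' ∩ W.1).card ≤ (U.1 ∩ W.1).card := by
    have : W.1 \ U.1 ⊆ U' ∩ W.1 := by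
      intro x hx
      exact mem_inter.2 ⟨hsub1 hx, (mem_sdiff.1 hx).1⟩
    have := card_le_card this
    omega
  obtain ⟨p, hp⟩ := walk_exists hn hk (U.1 ∩ W.1).card ⟨U', hU'card⟩ W hinter
  exact ⟨Walk.cons hadj p, by simp [Walk.length_cons]; omega⟩

lemma kneser_dist (hn : n = 2 * k + 1) (hk : 1 ≤ k) (U W : {s : Finset (Fin n) // s.card = k}) :
    (kneserGraph n k).dist U W = f k (U.1 ∩ W.1).card := by
  obtain ⟨p1, hp1⟩ := walk_exists hn hk (k - (U.1 ∩ W.1).card) U W (le_refl _)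
  obtain ⟨p2, hp2⟩ := walk_odd hn hk U W
  refine le_antisymm ?_ ?_
  · exact le_min (le_trans (SimpleGraph.dist_le p1) hp1) (le_trans (SimpleGraph.dist_le p2) hp2)
  · obtain ⟨p, hp⟩ := SimpleGraph.Reachable.exists_walk_length_eq_dist
      (⟨p1⟩ : (kneserGraph n k).Reachable U W)
    rw [← hp]
    exact f_le_walk hn p

lemma f_inj (s1 s2 : ℕ) (h1 : s1 ≤ k) (h2 : s2 ≤ k) (h : f k s1 = f k s2) : s1 = s2 := by
  simp only [f] at h; omega

end KneserAux


namespace DesignAux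

lemma double_count {n : ℕ} (B : Fin n → Finset (Fin n)) (A C : Finset (Fin n)) :
    ∑ i, (A ∩ B i).card * (C ∩ B i).card
      = ∑ p ∈ A, ∑ q ∈ C, (univ.filter fun i => p ∈ B i ∧ q ∈ B i).card := by
  have hcard : ∀ (S : Finset (Fin n)) i,
      (S ∩ B i).card = ∑ p ∈ S, if p ∈ B i then 1 else 0 := by
    intro S i
    rw [← filter_mem_eq_inter, card_filter]
  calc ∑ i, (A ∩ B i).card * (C ∩ B i).card
      = ∑ i, ∑ p ∈ A, ∑ q ∈ C,
          (if p ∈ B i then 1 else 0) * (if q ∈ B i then 1 else 0) := by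
        refine Finset.sum_congr rfl fun i _ => ?_
        rw [hcard A i, hcard C i, Finset.sum_mul_sum]
    _ = ∑ p ∈ A, ∑ q ∈ C, ∑ i,
          (if p ∈ B i then 1 else 0) * (if q ∈ B i then 1 else 0) := by
        rw [Finset.sum_comm]
        exact Finset.sum_congr rfl fun p _ => Finset.sum_comm
    _ = ∑ p ∈ A, ∑ q ∈ C, (univ.filter fun i => p ∈ B i ∧ q ∈ B i).card := by
        refine Finset.sum_congr rfl fun p _ => Finset.sum_congr rfl fun q _ => ?_
        rw [card_filter]
        refine Finset.sum_congr rfl fun i _ => ?_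
        by_cases h1 : p ∈ B i <;> by_cases h2 : q ∈ B i <;> simp [h1, h2]

variable {m : ℕ} {B : Fin (4 * m - 1) → Finset (Fin (4 * m - 1))}

lemma point_count (hm : 2 ≤ m) (hcard : ∀ i, (B i).card = 2 * m - 1)
    (hpair : ∀ p q : Fin (4 * m - 1), p ≠ q →
      (Finset.univ.filter (fun i => p ∈ B i ∧ q ∈ B i)).card = m - 1)
    (p : Fin (4 * m - 1)) :
    (univ.filter fun i => p ∈ B i).card = 2 * m - 1 := by
  have key := double_count B {p} (univ.erase p)
  have hL : ∑ i, (({p} : Finset (Fin (4*m-1))) ∩ B i).card * ((univ.erase p) ∩ B i).card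
      = (2 * m - 2) * (univ.filter fun i => p ∈ B i).card := by
    have hterm : ∀ i, (({p} : Finset (Fin (4*m-1))) ∩ B i).card * ((univ.erase p) ∩ B i).card
        = if p ∈ B i then 2 * m - 2 else 0 := by
      intro i
      have he : (univ.erase p) ∩ B i = (B i).erase p := by
        ext x; simp only [mem_inter, mem_erase, mem_univ, true_and, and_comm]
      by_cases h : p ∈ B i
      · rw [singleton_inter_of_mem h, he, card_erase_of_mem h, hcard i, card_singleton,
          if_pos h]
        omega
      · rw [singleton_inter_of_notMem h]
        simp [h]
    rw [Finset.sum_congr rfl fun i _ => hterm i]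
    rw [← Finset.sum_filter, Finset.sum_const, smul_eq_mul, Nat.mul_comm]
  have hR : ∑ p' ∈ ({p} : Finset (Fin (4*m-1))), ∑ q ∈ univ.erase p,
      (univ.filter fun i => p' ∈ B i ∧ q ∈ B i).card = (4 * m - 2) * (m - 1) := by
    rw [Finset.sum_singleton]
    rw [Finset.sum_congr rfl fun q hq => hpair p q (Ne.symm (mem_erase.1 hq).1)]
    rw [Finset.sum_const, smul_eq_mul, card_erase_of_mem (mem_univ p), card_univ,
      Fintype.card_fin]
    have : 4 * m - 1 - 1 = 4 * m - 2 := by omega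
    rw [this]
  rw [hL, hR] at key
  have heq : (4 * m - 2) * (m - 1) = (2 * m - 2) * (2 * m - 1) := by
    have e1 : 4 * m - 2 = 2 * (2 * m - 1) := by omega
    have e2 : 2 * m - 2 = 2 * (m - 1) := by omega
    rw [e1, e2]; ring
  rw [heq] at key
  exact Nat.eq_of_mul_eq_mul_left (by omega : 0 < 2 * m - 2) key

lemma design_resolve (hm : 2 ≤ m) (hcard : ∀ i, (B i).card = 2 * m - 1)
    (hpair : ∀ p q : Fin (4 * m - 1), p ≠ q →
      (Finset.univ.filter (fun i => p ∈ B i ∧ q ∈ B i)).card = m - 1)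
    (u v : Finset (Fin (4 * m - 1))) (hu : u.card = 2 * m - 1) (hv : v.card = 2 * m - 1)
    (huv : u ≠ v) :
    ∃ i, (u ∩ B i).card ≠ (v ∩ B i).card := by
  by_contra h
  push_neg at h
  set A := u \ v with hA
  set C := v \ u with hC
  have hACdisj : Disjoint A C := disjoint_sdiff_sdiff
  have hAcard : A.card + (u ∩ v).card = 2 * m - 1 := by
    have h' := card_inter_add_card_sdiff u v
    rw [← hA] at h'
    omega
  have hCcard : C.card + (u ∩ v).card = 2 * m - 1 := by
    have h' := card_inter_add_card_sdiff v u
    rw [inter_comm, ← hC] at h'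
    omega
  set t := A.card with ht
  have hCt : C.card = t := by omega
  have htpos : 1 ≤ t := by
    rcases Nat.eq_zero_or_pos t with h0 | h
    · exfalso
      have : u ⊆ v := by
        rw [← sdiff_eq_empty_iff_subset]
        exact card_eq_zero.mp (by rw [← hA] at *; omega)
      exact huv (eq_of_subset_of_card_le this (by omega))
    · exact h
  -- intersections with blocks agree on A and C
  have hAC : ∀ i, (A ∩ B i).card = (C ∩ B i).card := by
    intro i
    have hu' : (u ∩ B i).card = ((u ∩ v) ∩ B i).card + (A ∩ B i).card := by
      have hsplit : (u ∩ v ∩ B i) ∪ (A ∩ B i) = u ∩ B i := by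
        rw [hA]; ext x
        simp only [mem_union, mem_inter, mem_sdiff]
        tauto
      have hdisj : Disjoint (u ∩ v ∩ B i) (A ∩ B i) := by
        refine Disjoint.mono inter_subset_left inter_subset_left ?_
        rw [hA]
        exact Finset.sdiff_disjoint.symm.mono_left inter_subset_right
      rw [← hsplit, card_union_of_disjoint hdisj]
    have hv' : (v ∩ B i).card = ((u ∩ v) ∩ B i).card + (C ∩ B i).card := by
      have hsplit : (u ∩ v ∩ B i) ∪ (C ∩ B i) = v ∩ B i := by
        rw [hC]; ext x
        simp only [mem_union, mem_inter, mem_sdiff]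
        tauto
      have hdisj : Disjoint (u ∩ v ∩ B i) (C ∩ B i) := by
        refine Disjoint.mono inter_subset_left inter_subset_left ?_
        rw [hC]
        exact Finset.sdiff_disjoint.symm.mono_left inter_subset_left
      rw [← hsplit, card_union_of_disjoint hdisj]
    have := h i
    omega
  -- two counts
  have hS1 : ∑ i, (A ∩ B i).card * (C ∩ B i).card = t * t * (m - 1) := by
    rw [double_count]
    have : ∀ p ∈ A, ∑ q ∈ C, (univ.filter fun i => p ∈ B i ∧ q ∈ B i).card
        = t * (m - 1) := by
      intro p hp
      rw [Finset.sum_congr rfl fun q hq => hpair p q ?_]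
      · rw [Finset.sum_const, smul_eq_mul, hCt]
      · intro hpq
        exact (hACdisj.forall_ne_finset hp hq) hpq
    rw [Finset.sum_congr rfl this, Finset.sum_const, smul_eq_mul, ← ht, Nat.mul_assoc]
  have hS2 : ∑ i, (A ∩ B i).card * (A ∩ B i).card
      = t * (2 * m - 1) + t * (t - 1) * (m - 1) := by
    rw [double_count]
    have inner : ∀ p ∈ A, ∑ q ∈ A, (univ.filter fun i => p ∈ B i ∧ q ∈ B i).card
        = (2 * m - 1) + (t - 1) * (m - 1) := by
      intro p hp
      rw [← Finset.sum_erase_add _ _ hp]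
      have h1 : ∑ q ∈ A.erase p, (univ.filter fun i => p ∈ B i ∧ q ∈ B i).card
          = (t - 1) * (m - 1) := by
        rw [Finset.sum_congr rfl fun q hq => hpair p q (Ne.symm (mem_erase.1 hq).1)]
        rw [Finset.sum_const, smul_eq_mul, card_erase_of_mem hp, ← ht]
      have h2 : (univ.filter fun i => p ∈ B i ∧ p ∈ B i).card = 2 * m - 1 := by
        simp only [and_self]
        exact point_count hm hcard hpair p
      rw [h1, h2]; omega
    rw [Finset.sum_congr rfl inner, Finset.sum_const, smul_eq_mul, ← ht]
    ring
  have hsame : ∑ i, (A ∩ B i).card * (A ∩ B i).card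
      = ∑ i, (A ∩ B i).card * (C ∩ B i).card := by
    exact Finset.sum_congr rfl fun i _ => by rw [hAC i]
  rw [hS1, hS2] at hsame
  -- contradiction: t*(2m-1) + t*(t-1)*(m-1) = t*t*(m-1) is impossible
  obtain ⟨a, rfl⟩ : ∃ a, m = a + 2 := ⟨m - 2, by omega⟩
  obtain ⟨b, hb⟩ : ∃ b, t = b + 1 := ⟨t - 1, by omega⟩
  rw [hb] at hsame
  have e1 : 2 * (a + 2) - 1 = 2 * a + 3 := by omega
  have e2 : (a + 2) - 1 = a + 1 := by omega
  have e3 : (b + 1) - 1 = b := by omega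
  rw [e1, e2, e3] at hsame
  nlinarith [hsame]

end DesignAux


/-- The blocks of a Hadamard design with parameters `(4m−1, 2m−1, m−1)` form a
resolving set for the Odd graph `O_{2m} = K(4m−1, 2m−1)`. -/
theorem hadamard_design_resolving_odd (m : ℕ) (hm : 2 ≤ m)
    (B : Fin (4 * m - 1) → Finset (Fin (4 * m - 1)))
    (hcard : ∀ i, (B i).card = 2 * m - 1)
    (hpair : ∀ p q : Fin (4 * m - 1), p ≠ q →
      (Finset.univ.filter (fun i => p ∈ B i ∧ q ∈ B i)).card = m - 1) :
    resolvingSet (kneserGraph (4 * m - 1) (2 * m - 1)) {X | ∃ i, X.1 = B i} := by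
  intro u v huv
  obtain ⟨i, hi⟩ := DesignAux.design_resolve hm hcard hpair u.1 v.1 u.2 v.2
    (fun h => huv (Subtype.ext h))
  refine ⟨⟨B i, hcard i⟩, ⟨i, rfl⟩, ?_⟩
  have hn : 4 * m - 1 = 2 * (2 * m - 1) + 1 := by omega
  have hk : 1 ≤ 2 * m - 1 := by omega
  rw [KneserAux.kneser_dist hn hk, KneserAux.kneser_dist hn hk]
  intro heq
  exact hi (KneserAux.f_inj _ _
    (KneserAux.vert_inter_le u ⟨B i, hcard i⟩)
    (KneserAux.vert_inter_le v ⟨B i, hcard i⟩) heq)
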